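/- There is a universal constant C such that for every n and every monotone function f : Ω_n → [0,1] with E(f M) > 0, where M = M_{[n]} is the majority function on all n variables, one has I(f) ≤ C √n · E(f M) · (1 + √(−log E(f M))). -/

import Mathlib

namespace BKS

open Finset Filter

variable {ι : Type} [Fintype ι] [DecidableEq ι]

/-- Probability of an event under the uniform measure on `ι → Bool`. -/
noncomputable def cprob (A : Finset (ι → Bool)) : ℝ :=
  (A.card : ℝ) / 2 ^ Fintype.card ι

/-- Expectation of a function under the uniform measure on `ι → Bool`. -/
noncomputable def cexpect (f : (ι → Bool) → ℝ) : ℝ :=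
  (∑ x : ι → Bool, f x) / 2 ^ Fintype.card ι

/-- Real-valued indicator of an event. -/
noncomputable def indE (A : Finset (ι → Bool)) : (ι → Bool) → ℝ :=
  fun x => if x ∈ A then 1 else 0

/-- Transition kernel of the ε-noise: probability that `N_ε(x) = y`. -/
noncomputable def noiseKernel (ε : ℝ) (x y : ι → Bool) : ℝ :=
  ∏ j : ι, if y j = x j then 1 - ε else ε

/-- `P(N_ε(x) ∈ A | x)`. -/
noncomputable def condProb (ε : ℝ) (A : Finset (ι → Bool)) (x : ι → Bool) : ℝ :=
  ∑ y ∈ A, noiseKernel ε x y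

/-- Sensitivity gauge φ(A, ε) = inf{δ > 0 : P{x : |P(N_ε(x) ∈ A | x) − P(A)| > δ} < δ}. -/
noncomputable def gauge (ε : ℝ) (A : Finset (ι → Bool)) : ℝ :=
  sInf {δ : ℝ | 0 < δ ∧
    cprob (@Finset.filter _ (fun x => δ < |condProb ε A x - cprob A|)
      (Classical.decPred _) Finset.univ) < δ}

/-- Flip the `k`-th bit. -/
def flipBit (k : ι) (x : ι → Bool) : ι → Bool := Function.update x k (!x k)

/-- Influence of the `k`-th variable: `I_k(f) = E|f(σ_k x) − f(x)|`. -/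
noncomputable def influence (k : ι) (f : (ι → Bool) → ℝ) : ℝ :=
  cexpect fun x => |f (flipBit k x) - f x|

/-- `I(f) = Σ_k I_k(f)`. -/
noncomputable def totalInf (f : (ι → Bool) → ℝ) : ℝ := ∑ k : ι, influence k f

/-- `II(f) = Σ_k I_k(f)²`. -/
noncomputable def sqInf (f : (ι → Bool) → ℝ) : ℝ := ∑ k : ι, (influence k f) ^ 2

/-- `II(A)` for an event `A`. -/
noncomputable def sqInfE (A : Finset (ι → Bool)) : ℝ := sqInf (indE A)

/-- A monotone (upward closed) event. -/
def MonotoneEvent (A : Finset (ι → Bool)) : Prop :=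
  ∀ x y : ι → Bool, (∀ j, x j ≤ y j) → x ∈ A → y ∈ A

/-- Fourier–Walsh coefficient `f̂(S) = E[f · u_S]`, where `u_S(x) = (−1)^{|S ∩ x|}`. -/
noncomputable def walshFourier (f : (ι → Bool) → ℝ) (S : Finset ι) : ℝ :=
  cexpect fun x => f x * (-1 : ℝ) ^ (S.filter fun j => x j = true).card

/-- `Q_ε f (x) = E[f(N_ε(x))]`. -/
noncomputable def Qop (ε : ℝ) (f : (ι → Bool) → ℝ) (x : ι → Bool) : ℝ :=
  ∑ y : ι → Bool, noiseKernel ε x y * f y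

/-- `VAR(f, ε)`: variance of `x ↦ E[f(N_ε(x)) | x]`. -/
noncomputable def VAR (ε : ℝ) (f : (ι → Bool) → ℝ) : ℝ :=
  cexpect fun x => (Qop ε f x - cexpect (Qop ε f)) ^ 2

/-- `P[A △ N_ε A]`. -/
noncomputable def probSymmDiff (ε : ℝ) (A : Finset (ι → Bool)) : ℝ :=
  cexpect fun x => ∑ y : ι → Bool, noiseKernel ε x y *
    (if (x ∈ A) ↔ (y ∈ A) then 0 else 1)

/-- `P[A \ N_ε A]`. -/
noncomputable def probOffDiff (ε : ℝ) (A : Finset (ι → Bool)) : ℝ :=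
  cexpect fun x => ∑ y : ι → Bool, noiseKernel ε x y *
    (if x ∈ A ∧ y ∉ A then 1 else 0)

/-- Majority function on the set `K`: `M_K(x) = sign(Σ_{j∈K}(2x_j − 1))`. -/
noncomputable def majority (K : Finset ι) (x : ι → Bool) : ℝ :=
  Real.sign (∑ j ∈ K, (2 * (if x j then (1:ℝ) else 0) - 1))

/-- Weighted majority function `M_w(x) = sign(Σ_j (2x_j − 1) w_j)`. -/
noncomputable def wMajority (w : ι → ℝ) (x : ι → Bool) : ℝ :=
  Real.sign (∑ j : ι, (2 * (if x j then (1:ℝ) else 0) - 1) * w j)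

/-- The discrete cube Ω_n = {0,1}^n. -/
abbrev Cube (n : ℕ) := Fin n → Bool

set_option maxHeartbeats 2000000

section MainProof

variable {n : ℕ}

private noncomputable def eps (k : Fin n) (x : Cube n) : ℝ :=
  2 * (if x k then (1:ℝ) else 0) - 1

private noncomputable def SS (x : Cube n) : ℝ := ∑ j, eps j x

private def cmpl (x : Cube n) : Cube n := fun j => !x j

private def ones (x : Cube n) : ℕ := (univ.filter fun j => x j = true).card

private lemma eps_le_one (k : Fin n) (x : Cube n) : eps k x ≤ 1 := by
  unfold eps; cases hx : x k <;> simp [hx] <;> norm_num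

private lemma eps_sq (k : Fin n) (x : Cube n) : eps k x * eps k x = 1 := by
  unfold eps; cases hx : x k <;> simp [hx] <;> norm_num

private lemma flipBit_invol (k : Fin n) : Function.Involutive (flipBit k : Cube n → Cube n) := by
  intro x
  funext j
  rcases eq_or_ne j k with rfl | h
  · simp [flipBit]
  · simp [flipBit, Function.update_of_ne h]

private lemma sum_flip (k : Fin n) (h : Cube n → ℝ) :
    ∑ x : Cube n, h (flipBit k x) = ∑ x : Cube n, h x :=
  Fintype.sum_bijective (flipBit k) ((flipBit_invol k).bijective) _ _ (fun _ => rfl)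

private lemma eps_flip_self (k : Fin n) (x : Cube n) : eps k (flipBit k x) = - eps k x := by
  unfold eps flipBit
  cases hx : x k <;> simp [hx] <;> norm_num

private lemma eps_flip_ne {j k : Fin n} (h : j ≠ k) (x : Cube n) :
    eps j (flipBit k x) = eps j x := by
  unfold eps flipBit
  rw [Function.update_of_ne h]

private lemma sum_abs_flip (f : Cube n → ℝ)
    (hmono : ∀ x y : Cube n, (∀ j, x j ≤ y j) → f x ≤ f y) (k : Fin n) :
    ∑ x : Cube n, |f (flipBit k x) - f x| = 2 * ∑ x : Cube n, f x * eps k x := by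
  have key : ∀ x : Cube n, |f (flipBit k x) - f x| = (f x - f (flipBit k x)) * eps k x := by
    intro x
    cases hx : x k with
    | true =>
        have hle : f (flipBit k x) ≤ f x := by
          apply hmono; intro j
          rcases eq_or_ne j k with rfl | h
          · simp [flipBit, hx]
          · simp [flipBit, Function.update_of_ne h]
        have he : eps k x = 1 := by norm_num [eps, hx]
        rw [he, mul_one, abs_of_nonpos (by linarith)]
        ring
    | false =>
        have hle : f x ≤ f (flipBit k x) := by
          apply hmono; intro j
          rcases eq_or_ne j k with rfl | h
          · simp [flipBit, hx]
          · simp [flipBit, Function.update_of_ne h]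
        have he : eps k x = -1 := by norm_num [eps, hx]
        rw [he, abs_of_nonneg (by linarith)]
        ring
  rw [Finset.sum_congr rfl (fun x _ => key x)]
  have h2 : ∑ x : Cube n, f (flipBit k x) * eps k x = - ∑ x : Cube n, f x * eps k x := by
    calc ∑ x : Cube n, f (flipBit k x) * eps k x
        = ∑ x : Cube n, f (flipBit k x) * eps k (flipBit k (flipBit k x)) := by
          refine Finset.sum_congr rfl fun x _ => by rw [flipBit_invol]
      _ = ∑ y : Cube n, f y * eps k (flipBit k y) := sum_flip k (fun y => f y * eps k (flipBit k y))
      _ = ∑ y : Cube n, -(f y * eps k y) := by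
          refine Finset.sum_congr rfl fun y _ => by rw [eps_flip_self]; ring
      _ = - ∑ y : Cube n, f y * eps k y := by rw [Finset.sum_neg_distrib]
  simp only [sub_mul]
  rw [Finset.sum_sub_distrib, h2]
  ring

private lemma totalInf_eq (f : Cube n → ℝ)
    (hmono : ∀ x y : Cube n, (∀ j, x j ≤ y j) → f x ≤ f y) :
    totalInf f = 2 * (∑ x : Cube n, f x * SS x) / 2 ^ n := by
  unfold totalInf influence cexpect
  simp only [Fintype.card_fin]
  rw [← Finset.sum_div]
  congr 1
  calc ∑ k : Fin n, ∑ x : Cube n, |f (flipBit k x) - f x|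
      = ∑ k : Fin n, 2 * ∑ x : Cube n, f x * eps k x :=
        Finset.sum_congr rfl fun k _ => sum_abs_flip f hmono k
    _ = 2 * ∑ k : Fin n, ∑ x : Cube n, f x * eps k x := by rw [Finset.mul_sum]
    _ = 2 * ∑ x : Cube n, ∑ k : Fin n, f x * eps k x := by rw [Finset.sum_comm]
    _ = 2 * ∑ x : Cube n, f x * SS x := by
        congr 1
        exact Finset.sum_congr rfl fun x _ => by rw [← Finset.mul_sum]; rfl

private lemma cmpl_invol : Function.Involutive (cmpl : Cube n → Cube n) := by
  intro x; funext j; simp [cmpl]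

private lemma sum_cmpl (h : Cube n → ℝ) :
    ∑ x : Cube n, h (cmpl x) = ∑ x : Cube n, h x :=
  Fintype.sum_bijective cmpl (cmpl_invol.bijective) _ _ (fun _ => rfl)

private lemma SS_cmpl (x : Cube n) : SS (cmpl x) = - SS x := by
  unfold SS
  rw [← Finset.sum_neg_distrib]
  refine Finset.sum_congr rfl fun j _ => ?_
  unfold eps cmpl
  cases hx : x j <;> simp [hx] <;> norm_num

private lemma sum_fS_eq (f : Cube n → ℝ) :
    ∑ x : Cube n, f x * SS x
      = ∑ x : Cube n, (f x - f (cmpl x)) * max (SS x) 0 := by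
  have h2 : ∑ x : Cube n, f (cmpl x) * max (SS x) 0
      = ∑ x : Cube n, f x * max (- SS x) 0 := by
    calc ∑ x : Cube n, f (cmpl x) * max (SS x) 0
        = ∑ x : Cube n, f (cmpl x) * max (SS (cmpl (cmpl x))) 0 := by
          refine Finset.sum_congr rfl fun x _ => by rw [cmpl_invol]
      _ = ∑ y : Cube n, f y * max (SS (cmpl y)) 0 := sum_cmpl (fun y => f y * max (SS (cmpl y)) 0)
      _ = ∑ y : Cube n, f y * max (- SS y) 0 := by
          refine Finset.sum_congr rfl fun y _ => by rw [SS_cmpl]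
  simp only [sub_mul]
  rw [Finset.sum_sub_distrib, h2, ← Finset.sum_sub_distrib]
  refine Finset.sum_congr rfl fun x _ => ?_
  rw [← mul_sub]
  congr 1
  rcases le_total (SS x) 0 with h | h
  · rw [max_eq_right h, max_eq_left (by linarith)]; ring
  · rw [max_eq_left h, max_eq_right (by linarith)]; ring

private lemma sum_fM_eq (f : Cube n → ℝ) :
    ∑ x : Cube n, f x * Real.sign (SS x)
      = ∑ x : Cube n, (f x - f (cmpl x)) * (if 0 < SS x then (1:ℝ) else 0) := by
  have h2 : ∑ x : Cube n, f (cmpl x) * (if 0 < SS x then (1:ℝ) else 0)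
      = ∑ x : Cube n, f x * (if SS x < 0 then (1:ℝ) else 0) := by
    calc ∑ x : Cube n, f (cmpl x) * (if 0 < SS x then (1:ℝ) else 0)
        = ∑ x : Cube n, f (cmpl x) * (if 0 < SS (cmpl (cmpl x)) then (1:ℝ) else 0) := by
          refine Finset.sum_congr rfl fun x _ => by rw [cmpl_invol]
      _ = ∑ y : Cube n, f y * (if 0 < SS (cmpl y) then (1:ℝ) else 0) := sum_cmpl (fun y => f y * (if 0 < SS (cmpl y) then (1:ℝ) else 0))
      _ = ∑ y : Cube n, f y * (if SS y < 0 then (1:ℝ) else 0) := by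
          refine Finset.sum_congr rfl fun y _ => ?_
          rw [SS_cmpl]
          congr 1
          by_cases h : SS y < 0
          · rw [if_pos (by linarith), if_pos h]
          · rw [if_neg (by intro hc; apply h; linarith), if_neg h]
  simp only [sub_mul]
  rw [Finset.sum_sub_distrib, h2, ← Finset.sum_sub_distrib]
  refine Finset.sum_congr rfl fun x _ => ?_
  rw [← mul_sub]
  congr 1
  rcases lt_trichotomy (SS x) 0 with h | h | h
  · rw [Real.sign_of_neg h, if_neg (by linarith), if_pos h]; ring
  · rw [h, Real.sign_zero]; norm_num
  · rw [Real.sign_of_pos h, if_pos h, if_neg (by linarith)]; ring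


private def ofSet (t : Finset (Fin n)) : Cube n := fun j => decide (j ∈ t)
private def toSet (x : Cube n) : Finset (Fin n) := univ.filter fun j => x j = true

private lemma toSet_ofSet (t : Finset (Fin n)) : toSet (ofSet t) = t := by
  ext j; simp [toSet, ofSet]

private lemma ofSet_toSet (x : Cube n) : ofSet (toSet x) = x := by
  funext j; cases hx : x j <;> simp [toSet, ofSet, hx]

private lemma ones_ofSet (t : Finset (Fin n)) : ones (ofSet t) = t.card := by
  unfold ones
  rw [show (univ.filter fun j => ofSet t j = true) = toSet (ofSet t) from rfl, toSet_ofSet]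

private lemma sum_level (f : Cube n → ℝ) (m : ℕ) :
    ∑ x ∈ univ.filter (fun x : Cube n => ones x = m), f x
      = ∑ t ∈ powersetCard m (univ : Finset (Fin n)), f (ofSet t) := by
  refine Finset.sum_nbij' toSet ofSet ?_ ?_ ?_ ?_ ?_
  · intro x hx
    rw [mem_powersetCard]
    exact ⟨subset_univ _, (Finset.mem_filter.mp hx).2⟩
  · intro t ht
    rw [Finset.mem_filter]
    exact ⟨mem_univ _, by rw [ones_ofSet, (mem_powersetCard.mp ht).2]⟩
  · intro x _; exact ofSet_toSet x
  · intro t _; exact toSet_ofSet t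
  · intro x _; rw [ofSet_toSet]

private lemma count_supersets {m : ℕ} (h1 : n ≤ 2 * m) (h2 : m ≤ n)
    {s : Finset (Fin n)} (hs : s.card = n - m) :
    ((powersetCard m (univ : Finset (Fin n))).filter (fun t => s ⊆ t)).card
      = m.choose (n - m) := by
  have key : ((powersetCard m (univ : Finset (Fin n))).filter (fun t => s ⊆ t)).card
      = (powersetCard (m - (n - m)) ((univ : Finset (Fin n)) \ s)).card := by
    refine Finset.card_nbij' (fun t => t \ s) (fun u => s ∪ u) ?_ ?_ ?_ ?_
    · intro t ht
      obtain ⟨htp, hst⟩ := Finset.mem_filter.mp ht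
      obtain ⟨-, hcard⟩ := mem_powersetCard.mp htp
      simp only [Finset.mem_coe]
      rw [mem_powersetCard]
      constructor
      · exact Finset.sdiff_subset_sdiff (subset_univ t) (le_refl s)
      · rw [Finset.card_sdiff_of_subset hst, hcard, hs]
    · intro u hu
      obtain ⟨hsub, hcard⟩ := mem_powersetCard.mp hu
      have hdisj : Disjoint s u :=
        Finset.disjoint_left.mpr (fun a ha hau => (Finset.mem_sdiff.mp (hsub hau)).2 ha)
      simp only [Finset.mem_coe]
      rw [Finset.mem_filter, mem_powersetCard]
      refine ⟨⟨subset_univ _, ?_⟩, Finset.subset_union_left⟩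
      rw [Finset.card_union_of_disjoint hdisj, hcard, hs]
      omega
    · intro t ht
      exact Finset.union_sdiff_of_subset (Finset.mem_filter.mp ht).2
    · intro u hu
      obtain ⟨hsub, -⟩ := mem_powersetCard.mp hu
      have hdisj : Disjoint s u :=
        Finset.disjoint_left.mpr (fun a ha hau => (Finset.mem_sdiff.mp (hsub hau)).2 ha)
      exact Finset.union_sdiff_cancel_left hdisj
  rw [key, Finset.card_powersetCard, Finset.card_sdiff_of_subset (subset_univ s), Finset.card_univ,
    Fintype.card_fin, hs]
  have e1 : n - (n - m) = m := by omega
  rw [e1]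
  have h3 : n - m ≤ m := by omega
  rw [← Nat.choose_symm h3]

private lemma level_le (f : Cube n → ℝ)
    (hmono : ∀ x y : Cube n, (∀ j, x j ≤ y j) → f x ≤ f y)
    {m : ℕ} (h1 : n ≤ 2 * m) (h2 : m ≤ n) :
    ∑ x ∈ univ.filter (fun x : Cube n => ones x = n - m), f x
      ≤ ∑ x ∈ univ.filter (fun x : Cube n => ones x = m), f x := by
  rw [sum_level, sum_level]
  have hC : 0 < ((m.choose (n - m) : ℕ) : ℝ) := by
    exact_mod_cast Nat.choose_pos (by omega : n - m ≤ m)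
  rw [← mul_le_mul_iff_of_pos_right hC]
  have hFmono : ∀ s t : Finset (Fin n), s ⊆ t → f (ofSet s) ≤ f (ofSet t) := by
    intro s t hst
    apply hmono
    intro j
    by_cases hj : j ∈ s
    · simp [ofSet, hj, hst hj]
    · simp [ofSet, hj]
  have hcond : ∀ (t s : Finset (Fin n)),
      t ∈ powersetCard m (univ : Finset (Fin n)) ∧ s ∈ powersetCard (n - m) t
        ↔ t ∈ (powersetCard m (univ : Finset (Fin n))).filter (fun t => s ⊆ t)
            ∧ s ∈ powersetCard (n - m) (univ : Finset (Fin n)) := by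
    intro t s
    simp only [mem_powersetCard, Finset.mem_filter]
    constructor
    · rintro ⟨⟨htu, htc⟩, ⟨hst, hsc⟩⟩
      exact ⟨⟨⟨htu, htc⟩, hst⟩, hst.trans htu, hsc⟩
    · rintro ⟨⟨⟨htu, htc⟩, hst⟩, -, hsc⟩
      exact ⟨⟨htu, htc⟩, hst, hsc⟩
  calc (∑ s ∈ powersetCard (n - m) (univ : Finset (Fin n)), f (ofSet s)) * (m.choose (n - m) : ℝ)
      = ∑ s ∈ powersetCard (n - m) (univ : Finset (Fin n)),
          ∑ _t ∈ (powersetCard m (univ : Finset (Fin n))).filter (fun t => s ⊆ t), f (ofSet s) := by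
        rw [Finset.sum_mul]
        refine Finset.sum_congr rfl fun s hs => ?_
        rw [Finset.sum_const, nsmul_eq_mul, count_supersets h1 h2 (mem_powersetCard.mp hs).2]
        ring
    _ ≤ ∑ s ∈ powersetCard (n - m) (univ : Finset (Fin n)),
          ∑ t ∈ (powersetCard m (univ : Finset (Fin n))).filter (fun t => s ⊆ t), f (ofSet t) := by
        refine Finset.sum_le_sum fun s _ => Finset.sum_le_sum fun t ht => ?_
        exact hFmono s t (Finset.mem_filter.mp ht).2
    _ = ∑ t ∈ powersetCard m (univ : Finset (Fin n)), ∑ s ∈ powersetCard (n - m) t, f (ofSet t) :=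
        (Finset.sum_comm' hcond).symm
    _ = ∑ t ∈ powersetCard m (univ : Finset (Fin n)), f (ofSet t) * (m.choose (n - m) : ℝ) := by
        refine Finset.sum_congr rfl fun t ht => ?_
        rw [Finset.sum_const, nsmul_eq_mul, Finset.card_powersetCard,
          (mem_powersetCard.mp ht).2]
        ring
    _ = (∑ t ∈ powersetCard m (univ : Finset (Fin n)), f (ofSet t)) * (m.choose (n - m) : ℝ) := by
        rw [Finset.sum_mul]
private lemma ones_le (x : Cube n) : ones x ≤ n := by
  unfold ones
  calc (univ.filter fun j => x j = true).card ≤ (univ : Finset (Fin n)).card :=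
        Finset.card_filter_le _ _
    _ = n := by simp

private lemma SS_eq_ones (x : Cube n) : SS x = 2 * (ones x : ℝ) - n := by
  unfold SS eps
  rw [Finset.sum_sub_distrib, ← Finset.mul_sum, Finset.sum_boole, Finset.sum_const,
    Finset.card_univ, Fintype.card_fin]
  unfold ones
  simp

private lemma ones_cmpl (x : Cube n) : ones (cmpl x) = n - ones x := by
  unfold ones cmpl
  have h : (univ.filter fun j => (!x j) = true) = (univ.filter fun j => x j = true)ᶜ := by
    ext j; simp
  rw [h, Finset.card_compl, Fintype.card_fin]

private lemma sum_cmpl_fiber (f : Cube n → ℝ) {m : ℕ} (hm : m ≤ n) :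
    ∑ x ∈ univ.filter (fun x : Cube n => ones x = m), f (cmpl x)
      = ∑ x ∈ univ.filter (fun x : Cube n => ones x = n - m), f x := by
  refine Finset.sum_nbij' cmpl cmpl ?_ ?_ ?_ ?_ ?_
  · intro a ha
    rw [Finset.mem_filter] at *
    exact ⟨mem_univ _, by rw [ones_cmpl, ha.2]⟩
  · intro a ha
    rw [Finset.mem_filter] at *
    refine ⟨mem_univ _, ?_⟩
    rw [ones_cmpl, ha.2]
    omega
  · intro a _; exact cmpl_invol a
  · intro a _; exact cmpl_invol a
  · intro a _; rfl

private lemma master (f : Cube n → ℝ)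
    (hmono : ∀ x y : Cube n, (∀ j, x j ≤ y j) → f x ≤ f y)
    (w : ℝ → ℝ) (hw : ∀ s : ℝ, 0 < s → 0 ≤ w s) :
    0 ≤ ∑ x : Cube n, (f x - f (cmpl x)) * (if 0 < SS x then w (SS x) else 0) := by
  rw [← Finset.sum_fiberwise_of_maps_to (g := ones) (t := Finset.range (n+1))
        (fun x _ => Finset.mem_range.mpr (Nat.lt_succ_of_le (ones_le x))) _]
  refine Finset.sum_nonneg fun m hm => ?_
  have hm' : m ≤ n := Nat.lt_succ_iff.mp (Finset.mem_range.mp hm)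
  have hfib : ∀ x ∈ univ.filter (fun x : Cube n => ones x = m),
      (f x - f (cmpl x)) * (if 0 < SS x then w (SS x) else 0)
        = (f x - f (cmpl x)) * (if 0 < 2 * (m:ℝ) - n then w (2 * (m:ℝ) - n) else 0) := by
    intro x hx
    have hS : SS x = 2 * (m:ℝ) - n := by
      rw [SS_eq_ones, (Finset.mem_filter.mp hx).2]
    rw [hS]
  rw [Finset.sum_congr rfl hfib, ← Finset.sum_mul, Finset.sum_sub_distrib, sum_cmpl_fiber f hm']
  by_cases hpos : 0 < 2 * (m:ℝ) - n
  · have hn2m : n ≤ 2 * m := by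
      have : (n:ℝ) < 2 * m := by linarith
      exact_mod_cast this.le
    have hlev := level_le f hmono hn2m hm'
    have hwc : 0 ≤ (if 0 < 2 * (m:ℝ) - n then w (2 * (m:ℝ) - n) else 0) := by
      rw [if_pos hpos]; exact hw _ hpos
    exact mul_nonneg (by linarith) hwc
  · rw [if_neg hpos, mul_zero]

private lemma card_cube : Fintype.card (Cube n) = 2 ^ n := by
  simp [Fintype.card_fun]

private lemma sum_SS_sq : ∑ x : Cube n, SS x ^ 2 = n * 2 ^ n := by
  have horth : ∀ j i : Fin n, ∑ x : Cube n, eps j x * eps i x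
      = if j = i then (2:ℝ)^n else 0 := by
    intro j i
    rcases eq_or_ne j i with rfl | hji
    · rw [if_pos rfl, Finset.sum_congr rfl fun x _ => eps_sq j x, Finset.sum_const,
        Finset.card_univ, card_cube]
      simp
    · rw [if_neg hji]
      have h := sum_flip i (fun y => eps j y * eps i y)
      have h2 : ∀ x : Cube n, eps j (flipBit i x) * eps i (flipBit i x)
          = -(eps j x * eps i x) := by
        intro x; rw [eps_flip_ne hji, eps_flip_self]; ring
      rw [Finset.sum_congr rfl fun x _ => h2 x, Finset.sum_neg_distrib] at h
      linarith
  calc ∑ x : Cube n, SS x ^ 2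
      = ∑ x : Cube n, ∑ j : Fin n, ∑ i : Fin n, eps j x * eps i x := by
        refine Finset.sum_congr rfl fun x _ => ?_
        rw [sq]
        exact Finset.sum_mul_sum _ _ _ _
    _ = ∑ j : Fin n, ∑ i : Fin n, ∑ x : Cube n, eps j x * eps i x := by
        rw [Finset.sum_comm]
        exact Finset.sum_congr rfl fun j _ => Finset.sum_comm
    _ = ∑ j : Fin n, ((2:ℝ)^n) := by
        refine Finset.sum_congr rfl fun j _ => ?_
        rw [Finset.sum_congr rfl fun i _ => horth j i, Finset.sum_ite_eq]
        simp
    _ = n * 2 ^ n := by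
        rw [Finset.sum_const, Finset.card_univ, Fintype.card_fin, nsmul_eq_mul]

private lemma SS_le (x : Cube n) : SS x ≤ n := by
  unfold SS
  calc ∑ j, eps j x ≤ ∑ _j : Fin n, (1:ℝ) := Finset.sum_le_sum fun j _ => eps_le_one j x
    _ = n := by simp

private lemma tail_count (hn : 1 ≤ n) {T : ℝ} (hT : 0 ≤ T) :
    ∑ x : Cube n, (if T < SS x then (1:ℝ) else 0) ≤ 2 ^ n * Real.exp (-T^2 / (4*n)) := by
  have hnR : (0:ℝ) < n := by exact_mod_cast hn
  by_cases hTn : T ≤ n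
  case neg =>
    push_neg at hTn
    have hzero : ∀ x : Cube n, (if T < SS x then (1:ℝ) else 0) = 0 := by
      intro x
      rw [if_neg (not_lt.mpr (le_trans (SS_le x) hTn.le))]
    rw [Finset.sum_congr rfl fun x _ => hzero x, Finset.sum_const, smul_zero]
    positivity
  case pos =>
    set lam : ℝ := T / (2*n) with hlam
    have hlam0 : 0 ≤ lam := by positivity
    have hlam1 : lam ≤ 1/2 := by
      rw [hlam, div_le_iff₀ (by linarith)]
      linarith
    have step1 : ∑ x : Cube n, (if T < SS x then (1:ℝ) else 0)
        ≤ ∑ x : Cube n, Real.exp (lam * (SS x - T)) := by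
      refine Finset.sum_le_sum fun x _ => ?_
      by_cases h : T < SS x
      · rw [if_pos h]
        have h0 : 0 ≤ lam * (SS x - T) := mul_nonneg hlam0 (by linarith)
        calc (1:ℝ) = Real.exp 0 := Real.exp_zero.symm
          _ ≤ _ := Real.exp_le_exp.mpr h0
      · rw [if_neg h]; positivity
    have step2 : ∑ x : Cube n, Real.exp (lam * (SS x - T))
        = Real.exp (-(lam*T)) * ∑ x : Cube n, Real.exp (lam * SS x) := by
      rw [Finset.mul_sum]
      refine Finset.sum_congr rfl fun x _ => ?_
      rw [← Real.exp_add]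
      ring_nf
    have step3 : ∑ x : Cube n, Real.exp (lam * SS x)
        = (Real.exp lam + Real.exp (-lam)) ^ n := by
      have h1 : ∀ x : Cube n, Real.exp (lam * SS x) = ∏ j : Fin n, Real.exp (lam * eps j x) := by
        intro x
        rw [← Real.exp_sum]
        congr 1
        rw [← Finset.mul_sum]
        rfl
      rw [Finset.sum_congr rfl fun x _ => h1 x]
      have h2 := Finset.prod_univ_sum (fun _ : Fin n => (univ : Finset Bool))
        (fun j b => Real.exp (lam * (2 * (if b then (1:ℝ) else 0) - 1)))
      rw [Fintype.piFinset_univ] at h2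
      have h3 : ∑ x : Cube n, ∏ j : Fin n, Real.exp (lam * eps j x)
          = ∏ j : Fin n, ∑ b : Bool, Real.exp (lam * (2 * (if b then (1:ℝ) else 0) - 1)) := by
        simp only [eps]
        exact h2.symm
      rw [h3]
      have h4 : ∀ j : Fin n, (∑ b : Bool, Real.exp (lam * (2 * (if b then (1:ℝ) else 0) - 1)))
          = Real.exp lam + Real.exp (-lam) := by
        intro j
        rw [Fintype.sum_bool]
        norm_num
      rw [Finset.prod_congr rfl fun j _ => h4 j, Finset.prod_const, Finset.card_univ,
        Fintype.card_fin]
    have step4 : Real.exp lam + Real.exp (-lam) ≤ 2 * Real.exp (lam^2) := by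
      have hsum2 : ∀ y : ℝ, ∑ m ∈ Finset.range 2, y ^ m / m.factorial = 1 + y := by
        intro y
        rw [Finset.sum_range_succ, Finset.sum_range_one]
        norm_num
      have hb1 := Real.exp_bound (x := lam) (by rw [abs_of_nonneg hlam0]; linarith) (n := 2)
        (by norm_num)
      have hb2 := Real.exp_bound (x := -lam) (by rw [abs_neg, abs_of_nonneg hlam0]; linarith)
        (n := 2) (by norm_num)
      rw [hsum2] at hb1 hb2
      have e1 : |lam| ^ 2 = lam ^ 2 := by rw [sq_abs]
      have e2 : |(-lam)| ^ 2 = lam ^ 2 := by rw [abs_neg, sq_abs]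
      rw [e1] at hb1
      rw [e2] at hb2
      norm_num [Nat.factorial] at hb1 hb2
      have hq1 := (abs_sub_le_iff.mp hb1).1
      have hq2 := (abs_sub_le_iff.mp hb2).1
      have hexp : 1 + lam^2 ≤ Real.exp (lam^2) := by
        have := Real.add_one_le_exp (lam^2)
        linarith
      nlinarith [sq_nonneg lam]
    have step5 : Real.exp (-(lam*T)) * (Real.exp lam + Real.exp (-lam)) ^ n
        ≤ Real.exp (-(lam*T)) * (2 * Real.exp (lam^2)) ^ n := by
      refine mul_le_mul_of_nonneg_left (pow_le_pow_left₀ (by positivity) step4 n)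
        (le_of_lt (Real.exp_pos _))
    have step6 : Real.exp (-(lam*T)) * (2 * Real.exp (lam^2)) ^ n
        = 2 ^ n * Real.exp (-T^2 / (4*n)) := by
      rw [mul_pow, ← Real.exp_nat_mul, ← mul_assoc, mul_comm (Real.exp (-(lam*T))),
        mul_assoc, ← Real.exp_add]
      congr 1
      rw [hlam]
      field_simp
      ring
    calc ∑ x : Cube n, (if T < SS x then (1:ℝ) else 0)
        ≤ ∑ x : Cube n, Real.exp (lam * (SS x - T)) := step1
      _ = Real.exp (-(lam*T)) * ∑ x : Cube n, Real.exp (lam * SS x) := step2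
      _ = Real.exp (-(lam*T)) * (Real.exp lam + Real.exp (-lam)) ^ n := by rw [step3]
      _ ≤ Real.exp (-(lam*T)) * (2 * Real.exp (lam^2)) ^ n := step5
      _ = 2 ^ n * Real.exp (-T^2 / (4*n)) := step6

end MainProof


/-- Bound on total influence via correlation with majority. -/
theorem totalInf_le_of_corr_majority :
    ∃ C : ℝ, ∀ (n : ℕ) (f : Cube n → ℝ),
      (∀ x y : Cube n, (∀ j, x j ≤ y j) → f x ≤ f y) →
      (∀ x, 0 ≤ f x ∧ f x ≤ 1) →
      0 < cexpect (fun x => f x * majority Finset.univ x) →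
      totalInf f ≤ C * Real.sqrt n *
        cexpect (fun x => f x * majority Finset.univ x) *
        (1 + Real.sqrt (-Real.log (cexpect (fun x => f x * majority Finset.univ x)))) := by
  refine ⟨8, fun n f hmono hbd hα => ?_⟩
  have hmaj : ∀ x : Cube n, majority Finset.univ x = Real.sign (SS x) := fun x => rfl
  set α := cexpect (fun x => f x * majority Finset.univ x) with hαdef
  clear_value α
  rcases Nat.eq_zero_or_pos n with rfl | hn
  · exfalso
    have hz : α = 0 := by
      rw [hαdef]
      unfold cexpect
      have hzz : ∀ x : Cube 0, f x * majority Finset.univ x = 0 := by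
        intro x
        rw [hmaj x]
        have : SS x = 0 := by unfold SS; simp
        rw [this, Real.sign_zero, mul_zero]
      rw [Finset.sum_congr rfl fun x _ => hzz x]
      simp
    rw [hz] at hα
    exact lt_irrefl 0 hα
  -- now 1 ≤ n
  have h2n : (0:ℝ) < 2 ^ n := by positivity
  have hnR : (0:ℝ) < n := by exact_mod_cast hn
  have hcard : (2:ℝ) ^ Fintype.card (Fin n) = 2 ^ n := by rw [Fintype.card_fin]
  have hα1 : α ≤ 1 := by
    rw [hαdef]
    unfold cexpect
    rw [hcard, div_le_one h2n]
    calc ∑ x : Cube n, f x * majority Finset.univ x ≤ ∑ _x : Cube n, (1:ℝ) := by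
          refine Finset.sum_le_sum fun x _ => ?_
          rw [hmaj x]
          have hs1 : Real.sign (SS x) ≤ 1 := by
            rcases Real.sign_apply_eq (SS x) with h|h|h <;> rw [h] <;> norm_num
          have hf := hbd x
          nlinarith [hf.1, hf.2]
      _ = 2 ^ n := by
          rw [Finset.sum_const, Finset.card_univ, card_cube]
          simp
  set L := -Real.log α with hL
  clear_value L
  have hL0 : 0 ≤ L := by
    rw [hL, neg_nonneg]
    exact Real.log_nonpos hα.le hα1
  have hsqL : 0 ≤ Real.sqrt L := Real.sqrt_nonneg _
  have h1L : (1:ℝ) ≤ 1 + Real.sqrt L := by linarith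
  set T := 2 * Real.sqrt 2 * Real.sqrt n * (1 + Real.sqrt L) with hTdef
  clear_value T
  have hT0 : 0 ≤ T := by rw [hTdef]; positivity
  have hTsq : T^2 = 8 * n * (1 + Real.sqrt L)^2 := by
    rw [hTdef, mul_pow, mul_pow, mul_pow, Real.sq_sqrt (by norm_num : (0:ℝ) ≤ 2),
      Real.sq_sqrt hnR.le]
    ring
  have hexpT : Real.exp (-T^2/(4*n)) ≤ α^2 := by
    have hge : (1 + Real.sqrt L)^2 ≥ L := by nlinarith [Real.sq_sqrt hL0]
    have h1 : -T^2/(4*n) ≤ 2 * Real.log α := by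
      rw [hTsq]
      have hcalc : -(8 * (n:ℝ) * (1 + Real.sqrt L)^2)/(4*n) = -2*(1+Real.sqrt L)^2 := by
        field_simp
        ring
      rw [hcalc]
      have h2L : 2 * Real.log α = -2 * L := by rw [hL]; ring
      rw [h2L]
      nlinarith [hge]
    calc Real.exp (-T^2/(4*n)) ≤ Real.exp (2 * Real.log α) := Real.exp_le_exp.mpr h1
      _ = α^2 := by
        rw [two_mul, Real.exp_add, Real.exp_log hα, sq]
  -- correlation identity
  have hsum_fM : ∑ x : Cube n, f x * majority Finset.univ x = 2^n * α := by
    rw [hαdef]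
    unfold cexpect
    rw [hcard]
    field_simp
  have hA : ∑ x : Cube n, (f x - f (cmpl x)) * (if 0 < SS x then (1:ℝ) else 0) = 2^n * α := by
    rw [← sum_fM_eq f, ← hsum_fM]
    exact Finset.sum_congr rfl fun x _ => by rw [hmaj x]
  -- split into bulk and tail
  set Tail := ∑ x : Cube n, (if T < SS x then SS x else 0) with hTail
  clear_value Tail
  have split : ∑ x : Cube n, (f x - f (cmpl x)) * max (SS x) 0
      ≤ T * (2^n * α) + Tail := by
    have e1 : ∑ x : Cube n, (f x - f (cmpl x)) * max (SS x) 0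
        = (∑ x : Cube n, (f x - f (cmpl x)) * (if 0 < SS x ∧ SS x ≤ T then SS x else 0))
          + ∑ x : Cube n, (f x - f (cmpl x)) * (if T < SS x then SS x else 0) := by
      rw [← Finset.sum_add_distrib]
      refine Finset.sum_congr rfl fun x _ => ?_
      rw [← mul_add]
      congr 1
      rcases le_or_gt (SS x) 0 with h | h
      · rw [max_eq_right h, if_neg (by rintro ⟨h1,-⟩; linarith),
          if_neg (by intro h1; linarith)]
        norm_num
      · rcases le_or_gt (SS x) T with h2 | h2
        · rw [max_eq_left h.le, if_pos ⟨h, h2⟩, if_neg (not_lt.mpr h2)]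
          ring
        · rw [max_eq_left h.le, if_neg (by rintro ⟨-,h3⟩; linarith), if_pos h2]
          ring
    rw [e1]
    have e2 : ∑ x : Cube n, (f x - f (cmpl x)) * (if 0 < SS x ∧ SS x ≤ T then SS x else 0)
        ≤ T * (2^n * α) := by
      rw [← hA]
      have hw : ∀ s : ℝ, 0 < s → 0 ≤ T - (if s ≤ T then s else 0) := by
        intro s hs
        by_cases h : s ≤ T
        · rw [if_pos h]; linarith
        · rw [if_neg h]; linarith
      have hm := master f hmono (fun s => T - (if s ≤ T then s else 0)) hw
      have expand : ∑ x : Cube n, (f x - f (cmpl x)) *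
            (if 0 < SS x then (T - (if SS x ≤ T then SS x else 0)) else 0)
          = T * (∑ x : Cube n, (f x - f (cmpl x)) * (if 0 < SS x then (1:ℝ) else 0))
            - ∑ x : Cube n, (f x - f (cmpl x)) * (if 0 < SS x ∧ SS x ≤ T then SS x else 0) := by
        rw [Finset.mul_sum, ← Finset.sum_sub_distrib]
        refine Finset.sum_congr rfl fun x _ => ?_
        by_cases h : 0 < SS x
        · by_cases h2 : SS x ≤ T
          · rw [if_pos h, if_pos h2, if_pos h, if_pos ⟨h, h2⟩]
            ring
          · rw [if_pos h, if_neg h2, if_pos h, if_neg (by rintro ⟨-,h3⟩; exact h2 h3)]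
            ring
        · rw [if_neg h, if_neg h, if_neg (by rintro ⟨h1,-⟩; exact h h1)]
          ring
      rw [expand] at hm
      linarith
    have e3 : ∑ x : Cube n, (f x - f (cmpl x)) * (if T < SS x then SS x else 0) ≤ Tail := by
      rw [hTail]
      refine Finset.sum_le_sum fun x _ => ?_
      by_cases h : T < SS x
      · rw [if_pos h]
        have hgle : f x - f (cmpl x) ≤ 1 := by
          have h1 := (hbd x).2
          have h2 := (hbd (cmpl x)).1
          linarith
        have hS0 : 0 ≤ SS x := by linarith
        nlinarith
      · rw [if_neg h, mul_zero]
    linarith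
  -- tail bound
  have hTail0 : 0 ≤ Tail := by
    rw [hTail]
    refine Finset.sum_nonneg fun x _ => ?_
    by_cases h : T < SS x
    · rw [if_pos h]; linarith
    · rw [if_neg h]
  have hTailB : Tail ≤ Real.sqrt n * 2^n * α := by
    have hind2 : ∀ x : Cube n, (if T < SS x then (1:ℝ) else 0)^2
        = (if T < SS x then (1:ℝ) else 0) := by
      intro x; by_cases h : T < SS x <;> simp [h]
    have hcs : Tail ^ 2 ≤ (∑ x : Cube n, (if T < SS x then (1:ℝ) else 0)) * (n * 2^n) := by
      rw [hTail, ← sum_SS_sq]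
      have hrw : ∀ x : Cube n, (if T < SS x then SS x else 0)
          = (if T < SS x then (1:ℝ) else 0) * SS x := by
        intro x; by_cases h : T < SS x <;> simp [h]
      rw [Finset.sum_congr rfl fun x _ => hrw x]
      have hcs0 := Finset.sum_mul_sq_le_sq_mul_sq Finset.univ
        (fun x : Cube n => if T < SS x then (1:ℝ) else 0) SS
      rw [Finset.sum_congr rfl fun x _ => hind2 x] at hcs0
      exact hcs0
    have hN := tail_count (n := n) hn hT0
    have hNα : ∑ x : Cube n, (if T < SS x then (1:ℝ) else 0) ≤ 2^n * α^2 := by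
      calc ∑ x : Cube n, (if T < SS x then (1:ℝ) else 0)
          ≤ 2 ^ n * Real.exp (-T^2 / (4*n)) := hN
        _ ≤ 2^n * α^2 := by nlinarith [hexpT, h2n]
    have hfin : Tail^2 ≤ (2^n * α^2) * (n * 2^n) :=
      le_trans hcs (mul_le_mul_of_nonneg_right hNα (by positivity))
    have hb0 : (0:ℝ) ≤ Real.sqrt n * 2^n * α := by positivity
    have hsq : (Real.sqrt n * 2^n * α)^2 = (2^n * α^2) * (n * 2^n) := by
      rw [mul_pow, mul_pow, Real.sq_sqrt hnR.le]
      ring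
    calc Tail = Real.sqrt (Tail^2) := (Real.sqrt_sq hTail0).symm
      _ ≤ Real.sqrt ((Real.sqrt n * 2^n * α)^2) := by
          rw [hsq]
          exact Real.sqrt_le_sqrt hfin
      _ = Real.sqrt n * 2^n * α := Real.sqrt_sq hb0
  -- assemble
  have hEsum : ∑ x : Cube n, f x * SS x ≤ T * (2^n * α) + Real.sqrt n * 2^n * α := by
    rw [sum_fS_eq f]
    linarith
  rw [totalInf_eq f hmono, div_le_iff₀ h2n]
  have hsn : 0 ≤ Real.sqrt (n:ℝ) := Real.sqrt_nonneg _
  have hT36 : T ≤ 3 * Real.sqrt (n:ℝ) * (1 + Real.sqrt L) := by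
    have hs2 : Real.sqrt 2 ≤ 1.5 := by
      nlinarith [Real.sq_sqrt (by norm_num : (0:ℝ) ≤ 2), Real.sqrt_nonneg 2]
    have h23 : 2 * Real.sqrt 2 ≤ 3 := by linarith
    rw [hTdef]
    have step : 2 * Real.sqrt 2 * Real.sqrt (n:ℝ) ≤ 3 * Real.sqrt (n:ℝ) :=
      mul_le_mul_of_nonneg_right h23 hsn
    exact mul_le_mul_of_nonneg_right step (by linarith)
  have h8 : 2*T + 2*Real.sqrt (n:ℝ) ≤ 8 * Real.sqrt (n:ℝ) * (1 + Real.sqrt L) := by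
    have hp : 0 ≤ Real.sqrt (n:ℝ) * Real.sqrt L := mul_nonneg hsn hsqL
    have e8 : 8 * Real.sqrt (n:ℝ) * (1 + Real.sqrt L)
        = 8*Real.sqrt (n:ℝ) + 8*(Real.sqrt (n:ℝ)*Real.sqrt L) := by ring
    have e3 : 3 * Real.sqrt (n:ℝ) * (1 + Real.sqrt L)
        = 3*Real.sqrt (n:ℝ) + 3*(Real.sqrt (n:ℝ)*Real.sqrt L) := by ring
    rw [e8]
    rw [e3] at hT36
    linarith
  have hmul := mul_le_mul_of_nonneg_right h8 (show (0:ℝ) ≤ α * 2^n by positivity)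
  calc 2 * (∑ x : Cube n, f x * SS x)
      ≤ 2 * (T * (2^n * α) + Real.sqrt n * 2^n * α) := by linarith
    _ = (2*T + 2*Real.sqrt n) * (α * 2^n) := by ring
    _ ≤ (8 * Real.sqrt n * (1 + Real.sqrt L)) * (α * 2^n) := hmul
    _ = 8 * Real.sqrt n * α * (1 + Real.sqrt L) * 2^n := by ring


end BKS
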